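/- Let F be a field and A an infinite-dimensional locally matrix algebra over F of countable dimension. Then the cardinality of the group Aut(A) of F-algebra automorphisms of A equals |F|^{ℵ₀}, the cardinal exponentiation of the cardinality of F by the countable cardinal ℵ₀. -/

import Mathlib

/-- A (not necessarily unital) associative algebra `A` over a field `F` is a *locally matrix
algebra* if every finite subset of `A` is contained in a subalgebra of `A` that is isomorphic
to a matrix algebra `Mₙ(F)` for some `n ≥ 1`. -/
def IsLocallyMatrix (F A : Type*) [Field F] [NonUnitalRing A] [Module F A]
    [SMulCommClass F A A] [IsScalarTower F A A] : Prop :=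
  ∀ s : Finset A, ∃ (B : NonUnitalSubalgebra F A) (n : ℕ), 0 < n ∧ (s : Set A) ⊆ (B : Set A) ∧
    ∃ f : B →ₙₐ[F] Matrix (Fin n) (Fin n) F, Function.Bijective f

universe u v

section AuxLocallyMatrix
open Module LinearMap

variable {F : Type*} [Field F]

section DualPair
variable {V : Type*} [AddCommGroup V] [Module F V]

lemma exists_dual_pair {w1 w2 : V} (h : LinearIndependent F ![w1, w2]) :
    ∃ c1 c2 : V →ₗ[F] F, c1 w1 = 1 ∧ c1 w2 = 0 ∧ c2 w1 = 0 ∧ c2 w2 = 1 := by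
  have hne : w1 ≠ w2 := by
    intro hw
    have h01 : (0 : Fin 2) ≠ 1 := by decide
    exact h01 (h.injective (by simpa [hw] using rfl))
  have hs : LinearIndepOn F id (Set.range ![w1, w2]) :=
    h.linearIndepOn_id
  have hsub := hs.subset_extend (Set.subset_univ _)
  have hw1 : w1 ∈ hs.extend (Set.subset_univ _) := hsub ⟨0, rfl⟩
  have hw2 : w2 ∈ hs.extend (Set.subset_univ _) := hsub ⟨1, rfl⟩
  set b := Basis.extend hs with hb
  have hbw1 : b ⟨w1, hw1⟩ = w1 := Basis.extend_apply_self hs ⟨w1, hw1⟩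
  have hbw2 : b ⟨w2, hw2⟩ = w2 := Basis.extend_apply_self hs ⟨w2, hw2⟩
  have r1 : b.repr w1 = Finsupp.single ⟨w1, hw1⟩ 1 := by
    have h' := congrArg b.repr hbw1
    rw [b.repr_self] at h'
    exact h'.symm
  have r2 : b.repr w2 = Finsupp.single ⟨w2, hw2⟩ 1 := by
    have h' := congrArg b.repr hbw2
    rw [b.repr_self] at h'
    exact h'.symm
  refine ⟨b.coord ⟨w1, hw1⟩, b.coord ⟨w2, hw2⟩, ?_, ?_, ?_, ?_⟩
  · rw [Basis.coord_apply, r1]; simp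
  · rw [Basis.coord_apply, r2]
    simp [Finsupp.single_apply, Subtype.ext_iff, hne.symm]
  · rw [Basis.coord_apply, r1]
    simp [Finsupp.single_apply, Subtype.ext_iff, hne]
  · rw [Basis.coord_apply, r2]; simp

lemma exists_indep_pair_of_two_le_finrank {p : Submodule F V} [Module.Finite F p]
    (h : 2 ≤ finrank F p) :
    ∃ w1 w2 : V, w1 ∈ p ∧ w2 ∈ p ∧ LinearIndependent F ![w1, w2] := by
  let b := Module.finBasis F p
  have h0 : (0 : ℕ) < finrank F p := by omega
  have h1 : (1 : ℕ) < finrank F p := by omega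
  let j0 : Fin (finrank F p) := ⟨0, h0⟩
  let j1 : Fin (finrank F p) := ⟨1, h1⟩
  have li : LinearIndependent F (fun i => ((b i : p) : V)) :=
    b.linearIndependent.map' p.subtype p.ker_subtype
  have hinj : Function.Injective (![j0, j1] : Fin 2 → Fin (finrank F p)) := by
    intro i j hij
    fin_cases i <;> fin_cases j <;> simp_all [j0, j1, Fin.ext_iff]
  have li2 := li.comp ![j0, j1] hinj
  refine ⟨(b j0 : V), (b j1 : V), (b j0 : p).2, (b j1 : p).2, ?_⟩
  have heq : (fun i => ((b i : p) : V)) ∘ ![j0, j1] = ![(b j0 : V), (b j1 : V)] := by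
    funext i; fin_cases i <;> rfl
  rwa [heq] at li2

end DualPair

section Key

lemma key_end {n : ℕ} {V : Type*} [AddCommGroup V] [Module F V] [FiniteDimensional F V]
    (i0 : Fin n) (hm : n + 2 ≤ finrank F V)
    (L : Fin n → Fin n → (V →ₗ[F] V))
    (hL : ∀ i j k l, (L i j) ∘ₗ (L k l) = if j = k then L i l else 0) :
    ∃ fm ym : V →ₗ[F] V, ym ≠ 0 ∧ fm ∘ₗ ym = ym ∧ ym ∘ₗ fm = 0 ∧
      ∀ j k, L j k ∘ₗ fm = fm ∘ₗ L j k ∧ L j k ∘ₗ ym = ym ∘ₗ L j k := by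
  classical
  have hLapp : ∀ i j k l (v : V), L i j (L k l v) = if j = k then L i l v else 0 := by
    intro i j k l v
    rw [← LinearMap.comp_apply, hL]
    split_ifs <;> simp
  have hq : ∀ w ∈ LinearMap.range (L i0 i0), L i0 i0 w = w := by
    rintro _ ⟨u, rfl⟩
    rw [hLapp]; simp
  by_cases hcase : 2 ≤ finrank F (LinearMap.range (L i0 i0))
  · -- multiplicity ≥ 2 case
    obtain ⟨w1, w2, hw1, hw2, li⟩ := exists_indep_pair_of_two_le_finrank hcase
    obtain ⟨c1, c2, hc11, hc12, hc21, hc22⟩ := exists_dual_pair li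
    have hw1ne : w1 ≠ 0 := by have := li.ne_zero 0; simpa using this
    set g : V →ₗ[F] V := (L i0 i0) ∘ₗ (c1.smulRight w1) ∘ₗ (L i0 i0) with hgdef
    set h : V →ₗ[F] V := (L i0 i0) ∘ₗ (c2.smulRight w1) ∘ₗ (L i0 i0) with hhdef
    have hgapp : ∀ v, g v = c1 (L i0 i0 v) • w1 := by
      intro v
      simp only [hgdef, LinearMap.comp_apply, LinearMap.smulRight_apply]
      rw [map_smul, hq w1 hw1]
    have hhapp : ∀ v, h v = c2 (L i0 i0 v) • w1 := by
      intro v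
      simp only [hhdef, LinearMap.comp_apply, LinearMap.smulRight_apply]
      rw [map_smul, hq w1 hw1]
    set fm : V →ₗ[F] V := ∑ i, (L i i0) ∘ₗ g ∘ₗ (L i0 i) with hfm
    set ym : V →ₗ[F] V := ∑ i, (L i i0) ∘ₗ h ∘ₗ (L i0 i) with hym
    have hfmapp : ∀ v, fm v = ∑ i, c1 (L i0 i v) • (L i i0 w1) := by
      intro v
      rw [hfm, LinearMap.sum_apply]
      refine Finset.sum_congr rfl fun i _ => ?_
      simp only [LinearMap.comp_apply]
      rw [hgapp, map_smul, hLapp]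
      simp
    have hymapp : ∀ v, ym v = ∑ i, c2 (L i0 i v) • (L i i0 w1) := by
      intro v
      rw [hym, LinearMap.sum_apply]
      refine Finset.sum_congr rfl fun i _ => ?_
      simp only [LinearMap.comp_apply]
      rw [hhapp, map_smul, hLapp]
      simp
    have hz : ∀ i k, L i0 k (L i i0 w1) = if k = i then w1 else 0 := by
      intro i k
      rw [hLapp]
      split_ifs <;> simp [hq w1 hw1]
    have hfz : ∀ i, fm (L i i0 w1) = L i i0 w1 := by
      intro i
      rw [hfmapp]
      rw [Finset.sum_eq_single_of_mem i (Finset.mem_univ i)]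
      · rw [hz, if_pos rfl, hc11, one_smul]
      · intro k _ hk
        rw [hz, if_neg hk]
        simp
    have hyz : ∀ i, ym (L i i0 w1) = 0 := by
      intro i
      rw [hymapp]
      refine Finset.sum_eq_zero fun k _ => ?_
      rw [hz]
      split_ifs <;> simp [hc21]
    refine ⟨fm, ym, ?_, ?_, ?_, ?_⟩
    · intro h0
      have hval : ym w2 = w1 := by
        rw [hymapp]
        rw [Finset.sum_eq_single_of_mem i0 (Finset.mem_univ i0)]
        · rw [hq w2 hw2, hc22, one_smul, hq w1 hw1]
        · intro k _ hk
          have hz2 : L i0 k w2 = 0 := by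
            obtain ⟨u2, hu2⟩ := hw2
            rw [← hu2, hLapp, if_neg hk]
          rw [hz2]
          simp
      rw [h0] at hval
      simp at hval
      exact hw1ne hval.symm
    · apply LinearMap.ext; intro v
      rw [LinearMap.comp_apply, hymapp, map_sum]
      simp only [map_smul, hfz]
    · apply LinearMap.ext; intro v
      rw [LinearMap.comp_apply, hfmapp, map_sum]
      simp only [map_smul, hyz, smul_zero]
      simp
    · intro j k
      have key : ∀ (c : V →ₗ[F] F) (v : V),
          L j k (∑ i, c (L i0 i v) • (L i i0 w1)) = ∑ i, c (L i0 i (L j k v)) • (L i i0 w1) := by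
        intro c v
        rw [map_sum]
        simp only [map_smul]
        rw [Finset.sum_eq_single_of_mem k (Finset.mem_univ k),
          Finset.sum_eq_single_of_mem j (Finset.mem_univ j)]
        all_goals try intro i _ hi
        all_goals first
          | (rw [hLapp, if_pos rfl, hLapp, if_pos rfl])
          | (rw [hLapp, if_neg (Ne.symm hi)]; simp)
          | (rw [hLapp, if_neg hi]; simp)
      constructor
      · apply LinearMap.ext; intro v
        rw [LinearMap.comp_apply, LinearMap.comp_apply, hfmapp, hfmapp (L j k v), key]
      · apply LinearMap.ext; intro v
        rw [LinearMap.comp_apply, LinearMap.comp_apply, hymapp, hymapp (L j k v), key]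
  · -- small multiplicity: use the kernel of e := ∑ L i i
    have hle1 : finrank F (LinearMap.range (L i0 i0)) ≤ 1 := by omega
    have hprin : (LinearMap.range (L i0 i0)).IsPrincipal :=
      ((LinearMap.range (L i0 i0)).finrank_le_one_iff_isPrincipal).mp hle1
    obtain ⟨w0, hw0⟩ := hprin
    set Le : V →ₗ[F] V := ∑ i, L i i with hLe
    have hrange : ∀ v, Le v ∈ Submodule.span F (Set.range fun i => L i i0 w0) := by
      intro v
      rw [hLe, LinearMap.sum_apply]
      refine Submodule.sum_mem _ fun i _ => ?_
      have hii : L i i v = L i i0 (L i0 i0 (L i0 i v)) := by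
        rw [hLapp, if_pos rfl, hLapp, if_pos rfl]
      have hmem : L i0 i0 (L i0 i v) ∈ LinearMap.range (L i0 i0) := ⟨L i0 i v, rfl⟩
      rw [hw0, Submodule.mem_span_singleton] at hmem
      obtain ⟨a, ha⟩ := hmem
      rw [hii, ← ha, map_smul]
      exact Submodule.smul_mem _ _ (Submodule.subset_span ⟨i, rfl⟩)
    have hrangele : LinearMap.range Le ≤ Submodule.span F (Set.range fun i => L i i0 w0) := by
      rintro _ ⟨v, rfl⟩; exact hrange v
    have hrankLe : finrank F (LinearMap.range Le) ≤ n := by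
      have h1 : finrank F (LinearMap.range Le)
          ≤ finrank F (Submodule.span F (Set.range fun i => L i i0 w0)) :=
        Submodule.finrank_mono hrangele
      have h2 : finrank F (Submodule.span F (Set.range fun i => L i i0 w0))
          ≤ (Set.range fun i => L i i0 w0).toFinset.card := finrank_span_le_card _
      have h3 : (Set.range fun i => L i i0 w0).toFinset.card ≤ n := by
        rw [Set.toFinset_range]
        calc (Finset.univ.image fun i => L i i0 w0).card ≤ Finset.univ.card :=
              Finset.card_image_le
          _ = n := by simp
      omega
    have hker : 2 ≤ finrank F (LinearMap.ker Le) := by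
      have := LinearMap.finrank_range_add_finrank_ker Le
      omega
    obtain ⟨v1, v2, hv1, hv2, li⟩ := exists_indep_pair_of_two_le_finrank hker
    obtain ⟨c1, c2, hc11, hc12, hc21, hc22⟩ := exists_dual_pair li
    have hv1ne : v1 ≠ 0 := by have := li.ne_zero 0; simpa using this
    rw [LinearMap.mem_ker] at hv1 hv2
    set P : V →ₗ[F] V := LinearMap.id - Le with hP
    have hPapp : ∀ v, P v = v - Le v := fun v => rfl
    have hPv1 : P v1 = v1 := by rw [hPapp, hv1, sub_zero]
    have hPv2 : P v2 = v2 := by rw [hPapp, hv2, sub_zero]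
    have hLP : ∀ j k, L j k ∘ₗ P = 0 := by
      intro j k
      apply LinearMap.ext; intro v
      have : L j k (Le v) = L j k v := by
        rw [hLe, LinearMap.sum_apply, map_sum]
        rw [Finset.sum_eq_single_of_mem k (Finset.mem_univ k)]
        · rw [hLapp, if_pos rfl]
        · intro i _ hi
          rw [hLapp, if_neg (Ne.symm hi)]
      simp [hPapp, map_sub, this]
    have hPL : ∀ j k, P ∘ₗ L j k = 0 := by
      intro j k
      apply LinearMap.ext; intro v
      have : Le (L j k v) = L j k v := by
        rw [hLe, LinearMap.sum_apply]
        rw [Finset.sum_eq_single_of_mem j (Finset.mem_univ j)]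
        · rw [hLapp, if_pos rfl]
        · intro i _ hi
          rw [hLapp (i := i) (j := i), if_neg hi]
      simp [hPapp, this]
    set fm : V →ₗ[F] V := P ∘ₗ (c1.smulRight v1) ∘ₗ P with hfm
    set ym : V →ₗ[F] V := P ∘ₗ (c2.smulRight v1) ∘ₗ P with hym
    have hfmapp : ∀ v, fm v = c1 (P v) • v1 := by
      intro v
      simp only [hfm, LinearMap.comp_apply, LinearMap.smulRight_apply]
      rw [map_smul, hPv1]
    have hymapp : ∀ v, ym v = c2 (P v) • v1 := by
      intro v
      simp only [hym, LinearMap.comp_apply, LinearMap.smulRight_apply]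
      rw [map_smul, hPv1]
    refine ⟨fm, ym, ?_, ?_, ?_, ?_⟩
    · intro h0
      have hval : ym v2 = v1 := by rw [hymapp, hPv2, hc22, one_smul]
      rw [h0] at hval
      simp at hval
      exact hv1ne hval.symm
    · apply LinearMap.ext; intro v
      rw [LinearMap.comp_apply, hymapp, map_smul, hfmapp, hPv1, hc11, one_smul]
    · apply LinearMap.ext; intro v
      rw [LinearMap.comp_apply, hfmapp, map_smul, hymapp, hPv1, hc21, zero_smul, smul_zero]
      rfl
    · intro j k
      constructor
      · apply LinearMap.ext; intro v
        have h1 : L j k (fm v) = 0 := by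
          rw [hfm]
          simp only [LinearMap.comp_apply]
          have := congrArg (fun φ => φ ((c1.smulRight v1) (P v))) (hLP j k)
          simpa using this
        have h2 : fm (L j k v) = 0 := by
          rw [hfm]
          simp only [LinearMap.comp_apply]
          have := congrArg (fun φ => φ v) (hPL j k)
          simp only [LinearMap.comp_apply, LinearMap.zero_apply] at this
          rw [this]
          simp
        simp [h1, h2]
      · apply LinearMap.ext; intro v
        have h1 : L j k (ym v) = 0 := by
          rw [hym]
          simp only [LinearMap.comp_apply]
          have := congrArg (fun φ => φ ((c2.smulRight v1) (P v))) (hLP j k)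
          simpa using this
        have h2 : ym (L j k v) = 0 := by
          rw [hym]
          simp only [LinearMap.comp_apply]
          have := congrArg (fun φ => φ v) (hPL j k)
          simp only [LinearMap.comp_apply, LinearMap.zero_apply] at this
          rw [this]
          simp
        simp [h1, h2]

end Key


variable {F : Type*} [Field F]


section KeyMatrix

lemma key_matrix {n m : ℕ} (i0 : Fin n) (hm : n + 2 ≤ m)
    (E : Fin n → Fin n → Matrix (Fin m) (Fin m) F)
    (hE : ∀ i j k l, E i j * E k l = if j = k then E i l else 0) :
    ∃ f y : Matrix (Fin m) (Fin m) F, y ≠ 0 ∧ f * y = y ∧ y * f = 0 ∧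
      ∀ i j, E i j * f = f * E i j ∧ E i j * y = y * E i j := by
  classical
  have hfr : n + 2 ≤ finrank F (Fin m → F) := by
    simpa [Module.finrank_fintype_fun_eq_card] using hm
  set L : Fin n → Fin n → ((Fin m → F) →ₗ[F] (Fin m → F)) :=
    fun i j => Matrix.toLin' (E i j) with hLdef
  have hL : ∀ i j k l, (L i j) ∘ₗ (L k l) = if j = k then L i l else 0 := by
    intro i j k l
    simp only [hLdef]
    rw [← Matrix.toLin'_mul, hE]
    split_ifs <;> simp
  obtain ⟨fm, ym, hy0, hfy, hyf, hcomm⟩ := key_end i0 hfr L hL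
  have hEL : ∀ i j, E i j = LinearMap.toMatrix' (L i j) := by
    intro i j
    simp only [hLdef]
    rw [LinearMap.toMatrix'_toLin']
  refine ⟨LinearMap.toMatrix' fm, LinearMap.toMatrix' ym, ?_, ?_, ?_, ?_⟩
  · intro h0
    exact hy0 ((LinearEquiv.map_eq_zero_iff LinearMap.toMatrix').mp h0)
  · rw [← LinearMap.toMatrix'_comp, hfy]
  · rw [← LinearMap.toMatrix'_comp, hyf, map_zero]
  · intro i j
    constructor
    · rw [hEL, ← LinearMap.toMatrix'_comp, ← LinearMap.toMatrix'_comp, (hcomm i j).1]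
    · rw [hEL, ← LinearMap.toMatrix'_comp, ← LinearMap.toMatrix'_comp, (hcomm i j).2]

end KeyMatrix
section Stage

variable (F : Type u) (A : Type v) [Field F] [NonUnitalRing A] [Module F A]
  [SMulCommClass F A A] [IsScalarTower F A A]

/-- A finite matrix stage inside `A`. -/
structure MStage where
  B : NonUnitalSubalgebra F A
  n : ℕ
  npos : 0 < n
  iso : B →ₙₐ[F] Matrix (Fin n) (Fin n) F
  bij : Function.Bijective iso

variable {F A}

noncomputable def MStage.linMap (S : MStage F A) :
    S.B →ₗ[F] Matrix (Fin S.n) (Fin S.n) F :=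
  { toFun := S.iso
    map_add' := fun a b => map_add S.iso a b
    map_smul' := fun c a => map_smul S.iso c a }

noncomputable def MStage.linEquiv (S : MStage F A) :
    S.B ≃ₗ[F] Matrix (Fin S.n) (Fin S.n) F :=
  LinearEquiv.ofBijective S.linMap S.bij

lemma MStage.finite (S : MStage F A) : Module.Finite F S.B :=
  Module.Finite.equiv S.linEquiv.symm

lemma MStage.finrank_eq (S : MStage F A) : finrank F S.B = S.n * S.n := by
  rw [S.linEquiv.finrank_eq]
  simp [Module.finrank_matrix]

end Stage
section StepLemma

variable {F : Type u} {A : Type v} [Field F] [NonUnitalRing A] [Module F A]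
  [SMulCommClass F A A] [IsScalarTower F A A]

lemma exists_next (hA : IsLocallyMatrix F A) (hinf : ¬ Module.Finite F A)
    (S : MStage F A) (x : A) :
    ∃ T : MStage F A, S.B ≤ T.B ∧ x ∈ T.B ∧ ∃ f y : A, f ∈ T.B ∧ y ∈ T.B ∧ y ≠ 0 ∧
      f * y = y ∧ y * f = 0 ∧ ∀ b ∈ S.B, b * y = y * b ∧ b * f = f * b := by
  classical
  have hSfin : Module.Finite F S.B := S.finite
  -- a finite spanning family for S.B
  let bb := Module.finBasis F S.B
  let s1 : Finset A := Finset.image (fun i => ((bb i : S.B) : A)) Finset.univ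
  -- a large linearly independent finset
  let N : ℕ := (S.n + 2) * (S.n + 2)
  have hrank : (N : Cardinal) ≤ Module.rank F A := by
    have h1 : ¬ (Module.rank F A < Cardinal.aleph0) := by
      rw [Module.rank_lt_aleph0_iff]; exact hinf
    exact le_trans (Cardinal.nat_lt_aleph0 N).le (not_lt.mp h1)
  obtain ⟨s2, hs2card, hs2li⟩ := le_rank_iff_exists_linearIndependent_finset.mp hrank
  obtain ⟨Bnew, m, hm0, hsub, g, hgbij⟩ := hA (s1 ∪ s2 ∪ {x})
  have hs1mem : ∀ i, ((bb i : S.B) : A) ∈ Bnew := by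
    intro i
    apply hsub
    simp only [Finset.coe_union, Set.mem_union]
    exact Or.inl (Or.inl (by simp [s1]))
  have hxmem : x ∈ Bnew := by
    apply hsub
    simp only [Finset.coe_union, Set.mem_union]
    exact Or.inr (by simp)
  have hs2mem : ∀ z ∈ s2, z ∈ Bnew := by
    intro z hz
    apply hsub
    simp only [Finset.coe_union, Set.mem_union]
    exact Or.inl (Or.inr (by simpa using hz))
  have hSle : S.B ≤ Bnew := by
    intro b hb
    have hrepr := bb.sum_repr ⟨b, hb⟩
    have hval := congrArg (Subtype.val) hrepr
    rw [AddSubmonoidClass.coe_finset_sum] at hval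
    simp only [SetLike.val_smul] at hval
    rw [← hval]
    show _ ∈ Bnew.toSubmodule
    exact Submodule.sum_mem _ (fun i _ => Submodule.smul_mem _ _ (hs1mem i))
  -- the new stage
  let T : MStage F A := ⟨Bnew, m, hm0, g, hgbij⟩
  have hTfin : Module.Finite F Bnew := T.finite
  -- dimension bound
  have hNle : N ≤ finrank F Bnew := by
    let vfam : s2 → Bnew := fun z => ⟨(z : A), hs2mem z z.2⟩
    have hli : LinearIndependent F vfam := by
      apply LinearIndependent.of_comp (Bnew.toSubmodule.subtype)
      have : (Bnew.toSubmodule.subtype ∘ vfam) = (Subtype.val : s2 → A) := rfl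
      rw [this]
      exact hs2li
    have := hli.fintype_card_le_finrank
    rwa [Fintype.card_coe, hs2card] at this
  have hm2 : S.n + 2 ≤ m := by
    have hfr : finrank F Bnew = m * m := T.finrank_eq
    by_contra hcon
    push_neg at hcon
    have : m * m < N := by
      have : m ≤ S.n + 1 := by omega
      calc m * m ≤ (S.n + 1) * (S.n + 1) := Nat.mul_le_mul this this
        _ < N := by simp only [N]; nlinarith
    omega
  -- the inverse of S.iso as a plain map
  let Sinv : Matrix (Fin S.n) (Fin S.n) F → S.B := (Equiv.ofBijective S.iso S.bij).symm
  have hSinv_app : ∀ M, S.iso (Sinv M) = M := fun M =>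
    (Equiv.ofBijective S.iso S.bij).apply_symm_apply M
  have hSinv_rev : ∀ b, Sinv (S.iso b) = b := fun b =>
    (Equiv.ofBijective S.iso S.bij).symm_apply_apply b
  have hSinj : Function.Injective S.iso := S.bij.1
  -- inclusion of S.B into Bnew
  let incl : S.B → Bnew := fun b => ⟨(b : A), hSle b.2⟩
  have hincl_mul : ∀ a b, incl (a * b) = incl a * incl b := fun a b => rfl
  -- matrix units
  let i0 : Fin S.n := ⟨0, S.npos⟩
  let E : Fin S.n → Fin S.n → Matrix (Fin m) (Fin m) F :=
    fun i j => g (incl (Sinv (Matrix.single i j 1)))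
  have hE : ∀ i j k l, E i j * E k l = if j = k then E i l else 0 := by
    intro i j k l
    rw [show E i j * E k l = g (incl (Sinv (Matrix.single i j 1))
        * incl (Sinv (Matrix.single k l 1))) from (map_mul g _ _).symm]
    rw [← hincl_mul]
    have hmulinv : Sinv (Matrix.single i j 1) * Sinv (Matrix.single k l 1)
        = Sinv (Matrix.single i j 1 * Matrix.single k l 1) := by
      apply hSinj
      rw [map_mul, hSinv_app, hSinv_app, hSinv_app]
    rw [hmulinv]
    by_cases hjk : j = k
    · subst hjk
      rw [Matrix.single_mul_single_same, one_mul, if_pos rfl]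
    · rw [Matrix.single_mul_single_of_ne (h := hjk), if_neg hjk]
      have hSinv0 : Sinv 0 = 0 := by
        apply hSinj
        rw [hSinv_app, map_zero]
      rw [hSinv0]
      have : incl 0 = 0 := rfl
      rw [this, map_zero]
  obtain ⟨f, y, hy0, hfy, hyf, hcomm⟩ := key_matrix i0 hm2 E hE
  -- pull f and y back to Bnew
  let ginv : Matrix (Fin m) (Fin m) F → Bnew := (Equiv.ofBijective g hgbij).symm
  have hginv_app : ∀ M, g (ginv M) = M := fun M =>
    (Equiv.ofBijective g hgbij).apply_symm_apply M
  have hginj : Function.Injective g := hgbij.1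
  set fB : Bnew := ginv f with hfBdef
  set yB : Bnew := ginv y with hyBdef
  refine ⟨T, hSle, hxmem, (fB : A), (yB : A), fB.2, yB.2, ?_, ?_, ?_, ?_⟩
  · intro h0
    apply hy0
    have hz : yB = 0 := Subtype.ext h0
    rw [← hginv_app y, ← hyBdef, hz, map_zero]
  · have : fB * yB = yB := by
      apply hginj
      rw [map_mul, hginv_app, hginv_app, hfy]
    exact congrArg Subtype.val this
  · have : yB * fB = 0 := by
      apply hginj
      rw [map_mul, hginv_app, hginv_app, hyf, map_zero]
    exact congrArg Subtype.val this
  · intro b hb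
    -- express b as a combination of the matrix units
    set M : Matrix (Fin S.n) (Fin S.n) F := S.iso ⟨b, hb⟩ with hM
    have hbM : incl ⟨b, hb⟩ = ∑ i, ∑ j, M i j • incl (Sinv (Matrix.single i j 1)) := by
      have h1 : (⟨b, hb⟩ : S.B) = Sinv M := (hSinv_rev ⟨b, hb⟩).symm
      have h2 : M = ∑ i, ∑ j, M i j • Matrix.single i j 1 := by
        conv_lhs => rw [Matrix.matrix_eq_sum_single M]
        refine Finset.sum_congr rfl fun i _ => Finset.sum_congr rfl fun j _ => ?_
        rw [Matrix.smul_single, smul_eq_mul, mul_one]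
      have h3 : Sinv M = ∑ i, ∑ j, M i j • Sinv (Matrix.single i j 1) := by
        apply hSinj
        rw [hSinv_app, map_sum]
        conv_lhs => rw [h2]
        refine Finset.sum_congr rfl fun i _ => ?_
        rw [map_sum]
        refine Finset.sum_congr rfl fun j _ => ?_
        rw [map_smul, hSinv_app]
      apply Subtype.ext
      have h5 := congrArg Subtype.val (h1.trans h3)
      simp only [AddSubmonoidClass.coe_finset_sum, SetLike.val_smul] at h5 ⊢
      exact h5
    have hgb : g (incl ⟨b, hb⟩) = ∑ i, ∑ j, M i j • E i j := by
      rw [hbM, map_sum]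
      refine Finset.sum_congr rfl fun i _ => ?_
      rw [map_sum]
      refine Finset.sum_congr rfl fun j _ => ?_
      rw [map_smul]
    have hcf : g (incl ⟨b, hb⟩) * f = f * g (incl ⟨b, hb⟩) := by
      rw [hgb, Finset.sum_mul, Finset.mul_sum]
      refine Finset.sum_congr rfl fun i _ => ?_
      rw [Finset.sum_mul, Finset.mul_sum]
      refine Finset.sum_congr rfl fun j _ => ?_
      rw [smul_mul_assoc, mul_smul_comm, (hcomm i j).1]
    have hcy : g (incl ⟨b, hb⟩) * y = y * g (incl ⟨b, hb⟩) := by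
      rw [hgb, Finset.sum_mul, Finset.mul_sum]
      refine Finset.sum_congr rfl fun i _ => ?_
      rw [Finset.sum_mul, Finset.mul_sum]
      refine Finset.sum_congr rfl fun j _ => ?_
      rw [smul_mul_assoc, mul_smul_comm, (hcomm i j).2]
    constructor
    · have : incl ⟨b, hb⟩ * yB = yB * incl ⟨b, hb⟩ := by
        apply hginj
        rw [map_mul, map_mul, hginv_app, hcy]
      exact congrArg Subtype.val this
    · have : incl ⟨b, hb⟩ * fB = fB * incl ⟨b, hb⟩ := by
        apply hginj
        rw [map_mul, map_mul, hginv_app, hcf]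
      exact congrArg Subtype.val this

end StepLemma
section ChainData

variable {F : Type u} {A : Type v} [Field F] [NonUnitalRing A] [Module F A]
  [SMulCommClass F A A] [IsScalarTower F A A]

lemma exists_first (hA : IsLocallyMatrix F A) : Nonempty (MStage F A) := by
  obtain ⟨B, n, hn, -, g, hg⟩ := hA ∅
  exact ⟨⟨B, n, hn, g, hg⟩⟩

noncomputable def chain (hA : IsLocallyMatrix F A) (hinf : ¬ Module.Finite F A)
    (a : ℕ → A) : ℕ → MStage F A := fun j =>
  Nat.rec (Classical.choice (exists_first hA))
    (fun j S => Classical.choose (exists_next hA hinf S (a j))) j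

lemma chain_spec (hA : IsLocallyMatrix F A) (hinf : ¬ Module.Finite F A)
    (a : ℕ → A) (j : ℕ) :
    (chain hA hinf a j).B ≤ (chain hA hinf a (j+1)).B ∧ a j ∈ (chain hA hinf a (j+1)).B ∧
      ∃ f y : A, f ∈ (chain hA hinf a (j+1)).B ∧ y ∈ (chain hA hinf a (j+1)).B ∧ y ≠ 0 ∧
        f * y = y ∧ y * f = 0 ∧
        ∀ b ∈ (chain hA hinf a j).B, b * y = y * b ∧ b * f = f * b :=
  Classical.choose_spec (exists_next hA hinf (chain hA hinf a j) (a j))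

/-- Packaged existence of the chain data used to build many automorphisms. -/
lemma exists_chain_data (hA : IsLocallyMatrix F A) (hinf : ¬ Module.Finite F A)
    (hcnt : Module.rank F A ≤ Cardinal.aleph0) :
    ∃ (B : ℕ → NonUnitalSubalgebra F A) (f y : ℕ → A),
      (∀ j k : ℕ, j ≤ k → B j ≤ B k) ∧ (∀ x : A, ∃ J, x ∈ B J) ∧
      (∀ j, f j ∈ B (j+1) ∧ y j ∈ B (j+1) ∧ y j ≠ 0 ∧ f j * y j = y j ∧ y j * f j = 0 ∧
        ∀ b ∈ B j, b * y j = y j * b ∧ b * f j = f j * b) := by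
  classical
  -- a spanning sequence
  have hranklow : Cardinal.aleph0 ≤ Module.rank F A := by
    have h1 : ¬ (Module.rank F A < Cardinal.aleph0) := by
      rw [Module.rank_lt_aleph0_iff]; exact hinf
    exact not_lt.mp h1
  have hrank_eq : Module.rank F A = Cardinal.aleph0 := le_antisymm hcnt hranklow
  set ι := Basis.ofVectorSpaceIndex F A
  have hb : Basis ι F A := Basis.ofVectorSpace F A
  have hmk : Cardinal.mk ι = Cardinal.aleph0 := by rw [hb.mk_eq_rank'', hrank_eq]
  have hcount : Countable ι := Cardinal.mk_le_aleph0_iff.mp hmk.le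
  have hinfι : Infinite ι := Cardinal.infinite_iff.mpr hmk.ge
  obtain ⟨d⟩ : Nonempty (Denumerable ι) := nonempty_denumerable_iff.mpr ⟨hcount, hinfι⟩
  let e : ι ≃ ℕ := @Denumerable.eqv ι d
  let a : ℕ → A := fun k => hb (e.symm k)
  have hspan : Submodule.span F (Set.range a) = ⊤ := by
    have : Set.range a = Set.range hb := by
      have : a = hb ∘ e.symm := rfl
      rw [this, Set.range_comp, Equiv.range_eq_univ, Set.image_univ]
    rw [this, hb.span_eq]
  -- the chain
  let C := chain hA hinf a
  let B : ℕ → NonUnitalSubalgebra F A := fun j => (C j).B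
  have hmono : Monotone B :=
    monotone_nat_of_le_succ (fun j => (chain_spec hA hinf a j).1)
  refine ⟨B, fun j => Classical.choose (chain_spec hA hinf a j).2.2,
    fun j => Classical.choose (Classical.choose_spec (chain_spec hA hinf a j).2.2),
    fun j k hjk => hmono hjk, ?_, ?_⟩
  · -- covering
    intro x
    have hx : x ∈ Submodule.span F (Set.range a) := by rw [hspan]; trivial
    have hle : Submodule.span F (Set.range a) ≤ ⨆ j, (B j).toSubmodule := by
      rw [Submodule.span_le]
      rintro _ ⟨k, rfl⟩
      exact Submodule.mem_iSup_of_mem (k+1) (chain_spec hA hinf a k).2.1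
    have hmono2 : Monotone (fun j => (B j).toSubmodule) := fun j k hjk => hmono hjk
    have hdir : Directed (· ≤ ·) (fun j => (B j).toSubmodule) := hmono2.directed_le
    obtain ⟨J, hJ⟩ := (Submodule.mem_iSup_of_directed _ hdir).mp (hle hx)
    exact ⟨J, hJ⟩
  · intro j
    exact Classical.choose_spec (Classical.choose_spec (chain_spec hA hinf a j).2.2)

end ChainData
section Conj

variable {F : Type u} {A : Type v} [Field F] [NonUnitalRing A] [Module F A]
  [SMulCommClass F A A] [IsScalarTower F A A]

/-- "Conjugation by `1 + c•w`" as a linear map, for `w` square-zero. -/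
noncomputable def Tmap (c : F) (w : A) : A →ₗ[F] A :=
  LinearMap.id + c • LinearMap.mulLeft F w - c • LinearMap.mulRight F w
    - (c * c) • ((LinearMap.mulRight F w).comp (LinearMap.mulLeft F w))

lemma Tmap_apply (c : F) (w x : A) :
    Tmap c w x = x + c • (w * x) - c • (x * w) - (c * c) • (w * x * w) := by
  simp [Tmap, LinearMap.add_apply, LinearMap.sub_apply, LinearMap.smul_apply,
    LinearMap.mulLeft_apply, LinearMap.mulRight_apply, LinearMap.comp_apply,
    LinearMap.id_apply]

lemma inr_sub' (p q : A) :
    (Unitization.inr (p - q) : Unitization F A) = Unitization.inr p - Unitization.inr q := by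
  rw [sub_eq_add_neg, Unitization.inr_add, Unitization.inr_neg, sub_eq_add_neg]

lemma inr_Tmap (c : F) (w x : A) :
    (Unitization.inr (Tmap c w x) : Unitization F A)
      = (1 + Unitization.inr (c • w)) * Unitization.inr x * (1 - Unitization.inr (c • w)) := by
  have hexp : (1 + (Unitization.inr (c • w) : Unitization F A)) * Unitization.inr x *
      (1 - Unitization.inr (c • w))
      = Unitization.inr x + Unitization.inr (c • w) * Unitization.inr x
        - Unitization.inr x * Unitization.inr (c • w)
        - Unitization.inr (c • w) * Unitization.inr x * Unitization.inr (c • w) := by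
    noncomm_ring
  rw [hexp, Tmap_apply]
  rw [show (Unitization.inr (c • w) : Unitization F A) * Unitization.inr x
      = Unitization.inr (c • (w * x)) from by rw [← Unitization.inr_mul, smul_mul_assoc]]
  rw [show (Unitization.inr x : Unitization F A) * Unitization.inr (c • w)
      = Unitization.inr (c • (x * w)) from by rw [← Unitization.inr_mul, mul_smul_comm]]
  rw [show (Unitization.inr (c • (w * x)) : Unitization F A) * Unitization.inr (c • w)
      = Unitization.inr ((c * c) • (w * x * w)) from by
        rw [← Unitization.inr_mul, mul_smul_comm, smul_mul_assoc, smul_smul]]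
  rw [inr_sub', inr_sub', Unitization.inr_add]

lemma unit_inv (c : F) {w : A} (hw : w * w = 0) :
    (1 - (Unitization.inr (c • w) : Unitization F A)) * (1 + Unitization.inr (c • w)) = 1 := by
  have hDD : (Unitization.inr (c • w) : Unitization F A) * Unitization.inr (c • w) = 0 := by
    rw [← Unitization.inr_mul]
    have : (c • w) * (c • w) = 0 := by
      rw [smul_mul_assoc, mul_smul_comm, hw, smul_zero, smul_zero]
    rw [this, Unitization.inr_zero]
  have hring : (1 - (Unitization.inr (c • w) : Unitization F A)) * (1 + Unitization.inr (c • w))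
      = 1 - Unitization.inr (c • w) * Unitization.inr (c • w) := by noncomm_ring
  rw [hring, hDD, sub_zero]

lemma Tmap_mul {w : A} (hw : w * w = 0) (c : F) (x z : A) :
    Tmap c w (x * z) = Tmap c w x * Tmap c w z := by
  apply (Unitization.inr_injective (R := F))
  rw [Unitization.inr_mul, inr_Tmap, inr_Tmap, inr_Tmap, Unitization.inr_mul]
  set D := (Unitization.inr (c • w) : Unitization F A)
  set X := (Unitization.inr x : Unitization F A)
  set Z := (Unitization.inr z : Unitization F A)
  have hinv : (1 - D) * (1 + D) = 1 := unit_inv c hw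
  calc (1 + D) * (X * Z) * (1 - D)
      = (1 + D) * (X * ((1 - D) * (1 + D)) * Z) * (1 - D) := by rw [hinv, mul_one]
    _ = ((1 + D) * X * (1 - D)) * ((1 + D) * Z * (1 - D)) := by noncomm_ring

lemma Tmap_invol {w : A} (hw : w * w = 0) (c : F) (x : A) :
    Tmap (-c) w (Tmap c w x) = x := by
  apply (Unitization.inr_injective (R := F))
  rw [inr_Tmap, inr_Tmap]
  have hneg : ((-c) • w) = -(c • w) := by rw [neg_smul]
  rw [hneg, Unitization.inr_neg]
  set D := (Unitization.inr (c • w) : Unitization F A)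
  set X := (Unitization.inr x : Unitization F A)
  have hinv : (1 - D) * (1 + D) = 1 := unit_inv c hw
  calc (1 + -D) * ((1 + D) * X * (1 - D)) * (1 - -D)
      = ((1 - D) * (1 + D)) * X * ((1 - D) * (1 + D)) := by noncomm_ring
    _ = X := by rw [hinv, one_mul, mul_one]

lemma Tmap_fix {w x : A} (hw : w * w = 0) (hx : w * x = x * w) (c : F) :
    Tmap c w x = x := by
  rw [Tmap_apply, hx, mul_assoc, hw, mul_zero, smul_zero, sub_zero, add_sub_cancel_right]

lemma Tmap_mem {B : NonUnitalSubalgebra F A} {w x : A} (hw : w ∈ B) (hx : x ∈ B) (c : F) :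
    Tmap c w x ∈ B := by
  rw [Tmap_apply]
  exact sub_mem (sub_mem (add_mem hx (SMulMemClass.smul_mem c (mul_mem hw hx)))
    (SMulMemClass.smul_mem c (mul_mem hx hw)))
    (SMulMemClass.smul_mem _ (mul_mem (mul_mem hw hx) hw))

end Conj
section PhiSec

variable {F : Type u} {A : Type v} [Field F] [NonUnitalRing A] [Module F A]
  [SMulCommClass F A A] [IsScalarTower F A A]

noncomputable def PhiSeq (y : ℕ → A) (c : ℕ → F) : ℕ → (A →ₗ[F] A)
  | 0 => LinearMap.id
  | (J+1) => (Tmap (c J) (y J)).comp (PhiSeq y c J)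

noncomputable def PhiInvSeq (y : ℕ → A) (c : ℕ → F) : ℕ → (A →ₗ[F] A)
  | 0 => LinearMap.id
  | (J+1) => (PhiInvSeq y c J).comp (Tmap (-(c J)) (y J))

/-- All the chain data needed to build the automorphisms. -/
def ChainHyp (B : ℕ → NonUnitalSubalgebra F A) (f y : ℕ → A) : Prop :=
  (∀ j k : ℕ, j ≤ k → B j ≤ B k) ∧ (∀ x : A, ∃ J, x ∈ B J) ∧
  (∀ j, f j ∈ B (j+1) ∧ y j ∈ B (j+1) ∧ y j ≠ 0 ∧ f j * y j = y j ∧ y j * f j = 0 ∧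
    ∀ b ∈ B j, b * y j = y j * b ∧ b * f j = f j * b)

namespace ChainHyp

variable {B : ℕ → NonUnitalSubalgebra F A} {f y : ℕ → A} (h : ChainHyp B f y)
include h

lemma mono {j k : ℕ} (hjk : j ≤ k) : B j ≤ B k := h.1 j k hjk
lemma cover (x : A) : ∃ J, x ∈ B J := h.2.1 x
lemma f_mem (j : ℕ) : f j ∈ B (j+1) := (h.2.2 j).1
lemma y_mem (j : ℕ) : y j ∈ B (j+1) := (h.2.2 j).2.1
lemma y_ne (j : ℕ) : y j ≠ 0 := (h.2.2 j).2.2.1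
lemma fy (j : ℕ) : f j * y j = y j := (h.2.2 j).2.2.2.1
lemma yf (j : ℕ) : y j * f j = 0 := (h.2.2 j).2.2.2.2.1
lemma comm_y (j : ℕ) {b : A} (hb : b ∈ B j) : b * y j = y j * b :=
  ((h.2.2 j).2.2.2.2.2 b hb).1
lemma comm_f (j : ℕ) {b : A} (hb : b ∈ B j) : b * f j = f j * b :=
  ((h.2.2 j).2.2.2.2.2 b hb).2

lemma y_sq (j : ℕ) : y j * y j = 0 := by
  nth_rewrite 2 [← h.fy j]
  rw [← mul_assoc, h.yf j, zero_mul]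

lemma Phi_mul (c : ℕ → F) (J : ℕ) (x z : A) :
    PhiSeq y c J (x * z) = PhiSeq y c J x * PhiSeq y c J z := by
  induction J with
  | zero => rfl
  | succ J ih =>
    show Tmap (c J) (y J) (PhiSeq y c J (x * z)) = _
    rw [ih, Tmap_mul (h.y_sq J)]
    rfl

lemma Phi_mem (c : ℕ → F) {J K : ℕ} (hJK : J ≤ K) {x : A} (hx : x ∈ B K) :
    PhiSeq y c J x ∈ B K := by
  induction J with
  | zero => exact hx
  | succ J ih =>
    have hJK' : J ≤ K := by omega
    exact Tmap_mem (h.mono (show J + 1 ≤ K from hJK) (h.y_mem J)) (ih hJK') _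

lemma PhiInv_mem (c : ℕ → F) {J K : ℕ} (hJK : J ≤ K) {x : A} (hx : x ∈ B K) :
    PhiInvSeq y c J x ∈ B K := by
  induction J generalizing x with
  | zero => exact hx
  | succ J ih =>
    have hJK' : J ≤ K := by omega
    exact ih hJK' (Tmap_mem (h.mono (show J + 1 ≤ K from hJK) (h.y_mem J)) hx _)

lemma Phi_fixes (c : ℕ → F) {J : ℕ} {x : A} (hx : ∀ i, i < J → y i * x = x * y i) :
    PhiSeq y c J x = x := by
  induction J with
  | zero => rfl
  | succ J ih =>
    show Tmap (c J) (y J) (PhiSeq y c J x) = x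
    rw [ih (fun i hi => hx i (by omega)), Tmap_fix (h.y_sq J) (hx J (by omega))]

lemma Phi_stab (c : ℕ → F) {J K : ℕ} (hJK : J ≤ K) {x : A} (hx : x ∈ B J) :
    PhiSeq y c K x = PhiSeq y c J x := by
  induction K with
  | zero =>
    have : J = 0 := by omega
    subst this; rfl
  | succ K ih =>
    rcases Nat.lt_or_ge J (K+1) with hlt | hge
    · have hJK' : J ≤ K := by omega
      show Tmap (c K) (y K) (PhiSeq y c K x) = _
      rw [ih hJK']
      have hmem : PhiSeq y c J x ∈ B K := h.Phi_mem c hJK' (h.mono hJK' hx)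
      rw [Tmap_fix (h.y_sq K) (h.comm_y K hmem).symm]
    · have : J = K + 1 := by omega
      subst this; rfl

lemma PhiInv_left (c : ℕ → F) (J : ℕ) (x : A) :
    PhiInvSeq y c J (PhiSeq y c J x) = x := by
  induction J generalizing x with
  | zero => rfl
  | succ J ih =>
    show PhiInvSeq y c J (Tmap (-(c J)) (y J) (Tmap (c J) (y J) (PhiSeq y c J x))) = x
    rw [Tmap_invol (h.y_sq J), ih]

lemma Phi_right (c : ℕ → F) (J : ℕ) (x : A) :
    PhiSeq y c J (PhiInvSeq y c J x) = x := by
  induction J generalizing x with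
  | zero => rfl
  | succ J ih =>
    show Tmap (c J) (y J) (PhiSeq y c J (PhiInvSeq y c J (Tmap (-(c J)) (y J) x))) = x
    rw [ih]
    have := Tmap_invol (h.y_sq J) (-(c J)) x
    rwa [neg_neg] at this

noncomputable def coverIdx (x : A) : ℕ :=
  @Nat.find (fun J => x ∈ B J) (Classical.decPred _) (h.cover x)

lemma coverIdx_spec (x : A) : x ∈ B (h.coverIdx x) :=
  @Nat.find_spec (fun J => x ∈ B J) (Classical.decPred _) (h.cover x)

noncomputable def phiFun (c : ℕ → F) (x : A) : A :=
  PhiSeq y c (h.coverIdx x) x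

lemma phi_eq (c : ℕ → F) {J : ℕ} {x : A} (hx : x ∈ B J) :
    h.phiFun c x = PhiSeq y c J x := by
  rcases le_total (h.coverIdx x) J with hle | hle
  · exact (h.Phi_stab c hle (h.coverIdx_spec x)).symm
  · exact h.Phi_stab c hle hx

lemma phi_add (c : ℕ → F) (x z : A) :
    h.phiFun c (x + z) = h.phiFun c x + h.phiFun c z := by
  set J := max (h.coverIdx x) (h.coverIdx z) with hJ
  have hxJ : x ∈ B J := h.mono (le_max_left _ _) (h.coverIdx_spec x)
  have hzJ : z ∈ B J := h.mono (le_max_right _ _) (h.coverIdx_spec z)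
  rw [h.phi_eq c (add_mem hxJ hzJ), h.phi_eq c hxJ, h.phi_eq c hzJ, map_add]

lemma phi_smul (c : ℕ → F) (t : F) (x : A) :
    h.phiFun c (t • x) = t • h.phiFun c x := by
  have hxJ := h.coverIdx_spec x
  rw [h.phi_eq c (SMulMemClass.smul_mem t hxJ), h.phi_eq c hxJ, map_smul]

lemma phi_mul (c : ℕ → F) (x z : A) :
    h.phiFun c (x * z) = h.phiFun c x * h.phiFun c z := by
  set J := max (h.coverIdx x) (h.coverIdx z) with hJ
  have hxJ : x ∈ B J := h.mono (le_max_left _ _) (h.coverIdx_spec x)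
  have hzJ : z ∈ B J := h.mono (le_max_right _ _) (h.coverIdx_spec z)
  rw [h.phi_eq c (mul_mem hxJ hzJ), h.phi_eq c hxJ, h.phi_eq c hzJ, h.Phi_mul]

lemma phi_bij (c : ℕ → F) : Function.Bijective (h.phiFun c) := by
  constructor
  · intro x z hxz
    set J := max (h.coverIdx x) (h.coverIdx z) with hJ
    have hxJ : x ∈ B J := h.mono (le_max_left _ _) (h.coverIdx_spec x)
    have hzJ : z ∈ B J := h.mono (le_max_right _ _) (h.coverIdx_spec z)
    rw [h.phi_eq c hxJ, h.phi_eq c hzJ] at hxz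
    have := congrArg (PhiInvSeq y c J) hxz
    rwa [h.PhiInv_left, h.PhiInv_left] at this
  · intro z
    set J := h.coverIdx z with hJ
    refine ⟨PhiInvSeq y c J z, ?_⟩
    rw [h.phi_eq c (h.PhiInv_mem c le_rfl (h.coverIdx_spec z)), h.Phi_right]

lemma phi_val_f (c : ℕ → F) (j : ℕ) :
    h.phiFun c (f j) = f j - c j • y j := by
  rw [h.phi_eq c (h.f_mem j)]
  show Tmap (c j) (y j) (PhiSeq y c j (f j)) = _
  have hfix : ∀ i, i < j → y i * f j = f j * y i := by
    intro i hi
    exact h.comm_f j (h.mono (show i + 1 ≤ j from hi) (h.y_mem i))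
  rw [h.Phi_fixes c hfix, Tmap_apply, h.yf j, h.fy j, zero_mul]
  simp

/-- The automorphism attached to a scalar sequence. -/
noncomputable def phiLin (c : ℕ → F) : A →ₗ[F] A :=
  { toFun := h.phiFun c
    map_add' := h.phi_add c
    map_smul' := h.phi_smul c }

lemma theta_injective : Function.Injective
    (fun c : ℕ → F => (⟨h.phiLin c, h.phi_bij c, h.phi_mul c⟩ :
      {φ : A →ₗ[F] A // Function.Bijective φ ∧ ∀ x z : A, φ (x * z) = φ x * φ z})) := by
  intro c c' hcc
  funext j
  have h1 : h.phiFun c (f j) = h.phiFun c' (f j) := by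
    have := congrArg (fun q => (q : {φ : A →ₗ[F] A // _}).1 (f j)) hcc
    exact this
  rw [h.phi_val_f c j, h.phi_val_f c' j] at h1
  have h2 : (c j - c' j) • y j = 0 := by
    rw [sub_smul]
    rw [sub_eq_sub_iff_sub_eq_sub] at h1
    simpa using h1.symm
  rcases smul_eq_zero.mp h2 with hc | hy
  · exact sub_eq_zero.mp hc
  · exact absurd hy (h.y_ne j)

end ChainHyp

end PhiSec
section Final

variable {F : Type u} {A : Type v} [Field F] [NonUnitalRing A] [Module F A]
  [SMulCommClass F A A] [IsScalarTower F A A]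

theorem card_aut_of_locallyMatrix' (hA : IsLocallyMatrix F A) (hinf : ¬ Module.Finite F A)
    (hcnt : Module.rank F A ≤ Cardinal.aleph0) :
    Cardinal.lift.{u}
        (Cardinal.mk {φ : A →ₗ[F] A //
          Function.Bijective φ ∧ ∀ x y : A, φ (x * y) = φ x * φ y}) =
      Cardinal.lift.{v} (Cardinal.mk F) ^ (Cardinal.aleph0 : Cardinal.{max u v}) := by
  classical
  obtain ⟨B, f, y, h1, h2, h3⟩ := exists_chain_data hA hinf hcnt
  have h : ChainHyp B f y := ⟨h1, h2, h3⟩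
  set S := {φ : A →ₗ[F] A // Function.Bijective φ ∧ ∀ x y : A, φ (x * y) = φ x * φ y} with hSdef
  -- lower bound embedding
  have hlow : Nonempty ((ℕ → F) ↪ S) := ⟨⟨_, h.theta_injective⟩⟩
  -- a countable basis of A
  have hranklow : Cardinal.aleph0 ≤ Module.rank F A := by
    have h1' : ¬ (Module.rank F A < Cardinal.aleph0) := by
      rw [Module.rank_lt_aleph0_iff]; exact hinf
    exact not_lt.mp h1'
  have hrank_eq : Module.rank F A = Cardinal.aleph0 := le_antisymm hcnt hranklow
  set ι := Basis.ofVectorSpaceIndex F A with hι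
  have hb0 : Basis ι F A := Basis.ofVectorSpace F A
  have hmk : Cardinal.mk ι = Cardinal.aleph0 := by rw [hb0.mk_eq_rank'', hrank_eq]
  have hcount : Countable ι := Cardinal.mk_le_aleph0_iff.mp hmk.le
  have hinfι : Infinite ι := Cardinal.infinite_iff.mpr hmk.ge
  obtain ⟨d⟩ : Nonempty (Denumerable ι) := nonempty_denumerable_iff.mpr ⟨hcount, hinfι⟩
  let b : Basis ℕ F A := hb0.reindex (@Denumerable.eqv ι d)
  -- upper bound embedding
  have hup : Nonempty (S ↪ (ℕ → F)) := by
    refine ⟨?_⟩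
    have e1 : S ↪ (A →ₗ[F] A) := Function.Embedding.subtype _
    have e2 : (A →ₗ[F] A) ↪ (ℕ → A) :=
      ⟨fun φ k => φ (b k), by
        intro φ ψ hφψ
        exact b.ext (fun k => congrFun hφψ k)⟩
    have e3 : A ↪ (ℕ → F) :=
      ⟨fun x k => b.repr x k, by
        intro x z hxz
        have : b.repr x = b.repr z := Finsupp.ext (fun k => congrFun hxz k)
        exact b.repr.injective this⟩
    have e4 : (ℕ → A) ↪ (ℕ → ℕ → F) :=
      ⟨fun g k => e3 (g k), by
        intro g g' hgg
        funext k
        exact e3.injective (congrFun hgg k)⟩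
    have e5 : (ℕ → ℕ → F) ≃ (ℕ → F) :=
      (Equiv.curry ℕ ℕ F).symm.trans
        (Equiv.arrowCongr (Denumerable.eqv (ℕ × ℕ)) (Equiv.refl F))
    exact ((e1.trans e2).trans e4).trans e5.toEmbedding
  have hS : Cardinal.lift.{u} (Cardinal.mk S) = Cardinal.lift.{v} (Cardinal.mk (ℕ → F)) :=
    le_antisymm (Cardinal.lift_mk_le'.mpr hup) (Cardinal.lift_mk_le'.mpr hlow)
  have harrow : (Cardinal.mk (ℕ → F)) = Cardinal.mk F ^ (Cardinal.aleph0 : Cardinal.{u}) := by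
    rw [Cardinal.mk_arrow]
    simp
  rw [hS, harrow, Cardinal.lift_power, Cardinal.lift_aleph0]

end Final

end AuxLocallyMatrix


/-- **Theorem 8 (automorphism count)**: for an infinite-dimensional locally matrix algebra
`A` of countable dimension over a field `F`, the group `Aut(A)` of `F`-algebra automorphisms
of `A` (bijective `F`-linear multiplicative self-maps) has cardinality `|F| ^ ℵ₀`. -/
theorem card_aut_of_locallyMatrix (F : Type u) (A : Type v) [Field F]
    [NonUnitalRing A] [Module F A] [SMulCommClass F A A] [IsScalarTower F A A]
    (hA : IsLocallyMatrix F A) (hinf : ¬ Module.Finite F A)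
    (hcnt : Module.rank F A ≤ Cardinal.aleph0) :
    Cardinal.lift.{u}
        (Cardinal.mk {φ : A →ₗ[F] A //
          Function.Bijective φ ∧ ∀ x y : A, φ (x * y) = φ x * φ y}) =
      Cardinal.lift.{v} (Cardinal.mk F) ^ (Cardinal.aleph0 : Cardinal.{max u v}) := by
  exact card_aut_of_locallyMatrix' hA hinf hcnt
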